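/- arXiv:1910.14629 — 2 statements merged into one kernel-verified Lean document; each statement's English description precedes it below -/
import Mathlib

section
/- Suppose every c ∈ C lying in C^λ for every irreducible λ of R lies in Δ (injectivity of Φ_R). Then Φ_L is injective: whenever λ_1, …, λ_n are irreducibles of R that are pairwise non-*-associate, c_i ∈ C_{λ_i} for each i, and c_1 + … + c_n ∈ Δ, it follows that c_i ∈ Δ for every i. -/
open Classical in
/-- `S(λ)`: `λ` itself if `λ` is an associate of its involutive image `λ*`,
and `λ · λ*` otherwise. -/
noncomputable def Sdual {R : Type*} [CommRing R] (σ : R →+* R) (l : R) : R :=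
  if Associated l (σ l) then l else l * σ l

/-- `λ` and `μ` are `*`-associates: `λ` is an associate of `μ` or of `μ* = σ μ`. -/
def StarAssoc {R : Type*} [CommRing R] (σ : R →+* R) (l m : R) : Prop :=
  Associated l m ∨ Associated l (σ m)

/-- The subset `Δ ⊆ C` of classes of elements whose `χ`-value is a unit. -/
def DeltaSet {K C R : Type*} [AddCommMonoid K] [AddCommGroup C] [CommRing R]
    (π : K →+ C) (χ : K → R) : Set C :=
  {c | ∃ k, π k = c ∧ IsUnit (χ k)}

/-- The `λ`-primary part `C_λ ⊆ C`: classes of elements whose `χ`-value is an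
associate of a power of `S(λ)`. -/
def Cprim {K C R : Type*} [AddCommMonoid K] [AddCommGroup C] [CommRing R]
    (σ : R →+* R) (π : K →+ C) (χ : K → R) (l : R) : Set C :=
  {c | ∃ k, π k = c ∧ ∃ n : ℕ, Associated (χ k) (Sdual σ l ^ n)}

/-- The coprimary part `C^λ ⊆ C`: classes of elements whose `χ`-value is not
divisible by `λ`. -/
def Cco {K C R : Type*} [AddCommMonoid K] [AddCommGroup C] [CommRing R]
    (π : K →+ C) (χ : K → R) (l : R) : Set C :=
  {c | ∃ k, π k = c ∧ ¬ l ∣ χ k}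

section Aux

variable {R : Type*} [CommRing R]

lemma sigma_isUnit (σ : R →+* R) {u : R} (hu : IsUnit u) : IsUnit (σ u) := by
  obtain ⟨v, rfl⟩ := hu
  exact isUnit_iff_exists_inv.mpr ⟨σ (v⁻¹ : Rˣ), by rw [← map_mul, Units.mul_inv, map_one]⟩

lemma sigma_assoc (σ : R →+* R) {a b : R} (h : Associated a b) :
    Associated (σ a) (σ b) := by
  obtain ⟨u, hu⟩ := h
  have h1 : IsUnit (σ (u : R)) := sigma_isUnit σ u.isUnit
  obtain ⟨v, hv⟩ := h1
  refine ⟨v, ?_⟩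
  rw [hv, ← map_mul, hu]

lemma sigma_irreducible (σ : R →+* R) (hσ : ∀ r, σ (σ r) = r) {l : R}
    (hl : Irreducible l) : Irreducible (σ l) := by
  constructor
  · intro h
    have := sigma_isUnit σ h
    rw [hσ] at this
    exact hl.not_isUnit this
  · intro a b hab
    have : l = σ a * σ b := by rw [← map_mul, ← hab, hσ]
    rcases hl.isUnit_or_isUnit this with h | h
    · left; have := sigma_isUnit σ h; rwa [hσ] at this
    · right; have := sigma_isUnit σ h; rwa [hσ] at this

open Classical in
lemma dvd_Sdual_pow {R : Type*} [CommRing R] [IsDomain R] [UniqueFactorizationMonoid R]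
    (σ : R →+* R) (hσ : ∀ r, σ (σ r) = r) {l m : R} (hl : Irreducible l)
    (hm : Irreducible m) {n : ℕ} (h : l ∣ Sdual σ m ^ n) : StarAssoc σ l m := by
  have hp : Prime l := UniqueFactorizationMonoid.irreducible_iff_prime.mp hl
  have h1 : l ∣ Sdual σ m := hp.dvd_of_dvd_pow h
  unfold Sdual at h1
  split_ifs at h1 with hif
  · exact Or.inl (hl.associated_of_dvd hm h1)
  · rcases hp.dvd_mul.mp h1 with h2 | h2
    · exact Or.inl (hl.associated_of_dvd hm h2)
    · exact Or.inr (hl.associated_of_dvd (sigma_irreducible σ hσ hm) h2)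

end Aux

/-- If `Φ_R` is injective, then `Φ_L` is injective: a sum of primary classes along
pairwise non-`*`-associate irreducibles lying in `Δ` has all its summands in `Δ`. -/
theorem statement3
    {K C R : Type*} [AddCommMonoid K] [AddCommGroup C]
    [CommRing R] [IsDomain R] [UniqueFactorizationMonoid R]
    (π : K →+ C) (hπ : Function.Surjective π)
    (σ : R →+* R) (hσ : ∀ r, σ (σ r) = r)
    (χ : K → R) (hχ : ∀ k, χ k ≠ 0)
    (hD1 : ∀ k, Associated (σ (χ k)) (χ k))
    (hD2 : ∀ k k', Associated (χ (k + k')) (χ k * χ k'))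
    (hD3 : ∀ k, ∃ j, π j = -π k ∧ Associated (χ j) (χ k))
    (hR : ∀ c : C, (∀ l : R, Irreducible l → c ∈ Cco π χ l) → c ∈ DeltaSet π χ) :
    ∀ (n : ℕ) (lam : Fin n → R) (cs : Fin n → C),
      (∀ i, Irreducible (lam i)) →
      (∀ i j, i ≠ j → ¬ StarAssoc σ (lam i) (lam j)) →
      (∀ i, cs i ∈ Cprim σ π χ (lam i)) →
      (∑ i, cs i) ∈ DeltaSet π χ →
      ∀ i, cs i ∈ DeltaSet π χ := by
  intro n lam cs hirr hpair hprim hsum i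
  -- χ 0 is a unit
  have hχ0 : IsUnit (χ 0) := by
    obtain ⟨u, hu⟩ := hD2 0 0
    rw [add_zero] at hu
    have : χ 0 * (u : R) = χ 0 * χ 0 := by rw [hu]
    have h1 : (u : R) = χ 0 := mul_left_cancel₀ (hχ 0) this
    exact h1 ▸ u.isUnit
  -- χ of a finite sum is associated to the product of χ's
  have hχsum : ∀ (s : Finset (Fin n)) (f : Fin n → K),
      Associated (χ (∑ j ∈ s, f j)) (∏ j ∈ s, χ (f j)) := by
    intro s f
    induction s using Finset.induction_on with
    | empty => simpa using associated_one_iff_isUnit.mpr hχ0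
    | insert a s ha ih =>
      rw [Finset.sum_insert ha, Finset.prod_insert ha]
      exact (hD2 _ _).trans (Associated.mul_left _ ih)
  -- choose representatives
  have hprim' := hprim
  choose k hkπ e hke using fun j => hprim j
  choose m hmπ hma using fun j => hD3 (k j)
  obtain ⟨k0, hk0π, hk0u⟩ := hsum
  apply hR
  intro l hl
  by_cases hdvd : l ∣ χ (k i)
  · -- use the alternative representative
    refine ⟨k0 + ∑ j ∈ Finset.univ.erase i, m j, ?_, ?_⟩
    · rw [map_add, map_sum, hk0π]
      have : ∀ j ∈ Finset.univ.erase i, π (m j) = -cs j := by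
        intro j _; rw [hmπ j, hkπ j]
      rw [Finset.sum_congr rfl this, Finset.sum_neg_distrib,
        ← Finset.add_sum_erase Finset.univ cs (Finset.mem_univ i)]
      abel
    · intro hdl
      have hp : Prime l := UniqueFactorizationMonoid.irreducible_iff_prime.mp hl
      have hassoc : Associated (χ (k0 + ∑ j ∈ Finset.univ.erase i, m j))
          (χ k0 * ∏ j ∈ Finset.univ.erase i, χ (m j)) :=
        (hD2 _ _).trans (Associated.mul_left _ (hχsum _ _))
      have hdl' : l ∣ χ k0 * ∏ j ∈ Finset.univ.erase i, χ (m j) :=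
        hassoc.dvd_iff_dvd_right.mp hdl
      rcases hp.dvd_mul.mp hdl' with h | h
      · exact hl.not_isUnit (isUnit_of_dvd_unit h hk0u)
      · obtain ⟨j, hjmem, hj⟩ := hp.exists_mem_finset_dvd h
        have hji : j ≠ i := (Finset.mem_erase.mp hjmem).1
        have hlj : l ∣ Sdual σ (lam j) ^ e j :=
          (((hma j).trans (hke j)).dvd_iff_dvd_right).mp hj
        have hli : l ∣ Sdual σ (lam i) ^ e i :=
          ((hke i).dvd_iff_dvd_right).mp hdvd
        have sai : StarAssoc σ l (lam i) := dvd_Sdual_pow σ hσ hl (hirr i) hli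
        have saj : StarAssoc σ l (lam j) := dvd_Sdual_pow σ hσ hl (hirr j) hlj
        apply hpair i j (Ne.symm hji)
        rcases sai with h1 | h1 <;> rcases saj with h2 | h2
        · exact Or.inl (h1.symm.trans h2)
        · exact Or.inr (h1.symm.trans h2)
        · -- Associated l (σ (lam i)), Associated l (lam j)
          refine Or.inr ?_
          have := sigma_assoc σ (h1.symm.trans h2)
          rwa [hσ] at this
        · refine Or.inl ?_
          have := sigma_assoc σ (h1.symm.trans h2)
          rwa [hσ, hσ] at this
  · exact ⟨k i, hkπ i, hdvd⟩
end

section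
/- Suppose C is strongly primary decomposable, i.e. (strong existence) for every k ∈ K one can write π(k) = d + c_1 + … + c_n with d ∈ Δ and c_i ∈ C_{λ_i}, where each λ_i is an irreducible divisor of Δ_k, and (uniqueness) whenever c_1 + … + c_n ∈ Δ with c_i ∈ C_{λ_i} for pairwise non-*-associate irreducibles λ_i, each c_i ∈ Δ. Then C is left primary decomposable and right primary decomposable; in particular, every c ∈ C lying in C^λ for every irreducible λ of R lies in Δ. -/
set_option linter.unusedSectionVars false

section StarA

variable {R : Type*} [CommRing R] {σ : R →+* R}

lemma starAssoc_refl (l : R) : StarAssoc σ l l := Or.inl (Associated.refl l)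

lemma starAssoc_symm (hσ : ∀ r, σ (σ r) = r) {l m : R} (h : StarAssoc σ l m) :
    StarAssoc σ m l := by
  rcases h with h | h
  · exact Or.inl h.symm
  · refine Or.inr ?_
    have h2 := h.map σ
    rw [hσ] at h2
    exact h2.symm

lemma starAssoc_trans (hσ : ∀ r, σ (σ r) = r) {l m p : R}
    (h1 : StarAssoc σ l m) (h2 : StarAssoc σ m p) : StarAssoc σ l p := by
  rcases h1 with h1 | h1 <;> rcases h2 with h2 | h2
  · exact Or.inl (h1.trans h2)
  · exact Or.inr (h1.trans h2)
  · exact Or.inr (h1.trans (h2.map σ))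
  · have h3 := h2.map σ
    rw [hσ] at h3
    exact Or.inl (h1.trans h3)

lemma sdual_assoc (hσ : ∀ r, σ (σ r) = r) {l m : R} (h : StarAssoc σ l m) :
    Associated (Sdual σ l) (Sdual σ m) := by
  rcases h with h | h
  · have h2 : Associated (σ l) (σ m) := h.map σ
    unfold Sdual
    by_cases hl : Associated l (σ l)
    · rw [if_pos hl, if_pos ((h.symm.trans hl).trans h2)]
      exact h
    · rw [if_neg hl, if_neg (fun hm => hl (h.trans (hm.trans h2.symm)))]
      exact h.mul_mul h2
  · have hsl : Associated (σ l) m := by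
      have h2 := h.map σ; rwa [hσ] at h2
    unfold Sdual
    by_cases hm : Associated m (σ m)
    · have hl : Associated l (σ l) := (h.trans hm.symm).trans hsl.symm
      rw [if_pos hl, if_pos hm]
      exact h.trans hm.symm
    · have hl : ¬ Associated l (σ l) := fun hlp => hm (hsl.symm.trans (hlp.symm.trans h))
      rw [if_neg hl, if_neg hm]
      have h3 : Associated (l * σ l) (σ m * m) := h.mul_mul hsl
      rwa [mul_comm (σ m) m] at h3

lemma irreducible_sigma (hσ : ∀ r, σ (σ r) = r) {l : R} (hl : Irreducible l) :
    Irreducible (σ l) := by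
  constructor
  · intro hu
    exact hl.not_isUnit (by have h2 := hu.map σ; rwa [hσ] at h2)
  · intro a b hab
    have h2 : l = σ a * σ b := by
      have h3 := congrArg σ hab; rwa [hσ, map_mul] at h3
    rcases hl.isUnit_or_isUnit h2 with h | h
    · left; have h4 := h.map σ; rwa [hσ] at h4
    · right; have h4 := h.map σ; rwa [hσ] at h4

open Classical in
lemma regroup {C : Type*} [AddCommGroup C] (σ : R →+* R)
    (hσ : ∀ r, σ (σ r) = r) {n : ℕ} (lam : Fin n → R) (cs : Fin n → C) :
    ∃ (N : ℕ) (g : Fin N → Fin n),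
      (∀ j j', j ≠ j' → ¬ StarAssoc σ (lam (g j)) (lam (g j'))) ∧
      ((∑ j, ∑ t ∈ Finset.univ.filter fun t => StarAssoc σ (lam t) (lam (g j)), cs t)
        = ∑ t, cs t) ∧
      (∀ i : Fin n, ∃ j, (Finset.univ.filter fun t => StarAssoc σ (lam t) (lam (g j)))
        = Finset.univ.filter fun t => StarAssoc σ (lam t) (lam i)) := by
  have hrefl : ∀ t : Fin n, StarAssoc σ (lam t) (lam t) := fun t => starAssoc_refl _
  set P : Fin n → Finset (Fin n) :=
    fun t => Finset.univ.filter fun s => StarAssoc σ (lam t) (lam s) with hP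
  have hPne : ∀ t, (P t).Nonempty :=
    fun t => ⟨t, Finset.mem_filter.mpr ⟨Finset.mem_univ _, hrefl t⟩⟩
  set f : Fin n → Fin n := fun t => (P t).min' (hPne t) with hfdef
  have hmem : ∀ t, StarAssoc σ (lam t) (lam (f t)) := fun t =>
    (Finset.mem_filter.mp ((P t).min'_mem (hPne t))).2
  have hPeq : ∀ {t u}, StarAssoc σ (lam t) (lam u) → P t = P u := by
    intro t u h
    ext s
    simp only [hP, Finset.mem_filter, Finset.mem_univ, true_and]
    exact ⟨fun h2 => starAssoc_trans hσ (starAssoc_symm hσ h) h2,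
      fun h2 => starAssoc_trans hσ h h2⟩
  have hfeq : ∀ {t u}, StarAssoc σ (lam t) (lam u) → f t = f u := by
    intro t u h
    simp only [hfdef]
    congr 1
    exact hPeq h
  have hiff : ∀ t u, StarAssoc σ (lam t) (lam u) ↔ f t = f u := by
    intro t u
    refine ⟨hfeq, fun h => ?_⟩
    have h1 := hmem t
    rw [h] at h1
    exact starAssoc_trans hσ h1 (starAssoc_symm hσ (hmem u))
  have hfix : ∀ t, f (f t) = f t := fun t => (hfeq (hmem t)).symm
  set reps : Finset (Fin n) := Finset.univ.image f with hreps
  have hrep : ∀ b ∈ reps, f b = b := by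
    intro b hb
    obtain ⟨x, -, rfl⟩ := Finset.mem_image.mp hb
    exact hfix x
  set e := reps.equivFin with he
  refine ⟨reps.card, fun j => (e.symm j).1, ?_, ?_, ?_⟩
  · intro j j' hne hsa
    apply hne
    have h1 : ((e.symm j : Fin n)) = (e.symm j' : Fin n) := by
      have h2 := hfeq hsa
      rwa [hrep _ (e.symm j).2, hrep _ (e.symm j').2] at h2
    exact e.symm.injective (Subtype.ext h1)
  · have h1 : ∀ j, (Finset.univ.filter fun t => StarAssoc σ (lam t) (lam (e.symm j).1))
        = Finset.univ.filter fun t => f t = (e.symm j).1 := by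
      intro j
      ext t
      simp only [Finset.mem_filter, Finset.mem_univ, true_and]
      rw [hiff, hrep _ (e.symm j).2]
    calc (∑ j, ∑ t ∈ Finset.univ.filter fun t => StarAssoc σ (lam t) (lam (e.symm j).1), cs t)
        = ∑ j, ∑ t ∈ Finset.univ.filter fun t => f t = (e.symm j).1, cs t :=
          Finset.sum_congr rfl fun j _ => by rw [h1 j]
      _ = ∑ b ∈ reps, ∑ t ∈ Finset.univ.filter fun t => f t = b, cs t := by
          refine Finset.sum_bij' (fun j _ => (e.symm j).1) (fun b hb => e ⟨b, hb⟩)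
            (fun j _ => (e.symm j).2) (fun b hb => Finset.mem_univ _)
            (fun j _ => by simp) (fun b hb => by simp) (fun j _ => rfl)
      _ = ∑ t, cs t :=
          Finset.sum_fiberwise_of_maps_to
            (fun x _ => Finset.mem_image_of_mem f (Finset.mem_univ x)) cs
  · intro i
    have hfi : f i ∈ reps := Finset.mem_image_of_mem f (Finset.mem_univ i)
    refine ⟨e ⟨f i, hfi⟩, ?_⟩
    show (Finset.univ.filter fun t => StarAssoc σ (lam t) (lam ((e.symm (e ⟨f i, hfi⟩)) : Fin n)))
      = Finset.univ.filter fun t => StarAssoc σ (lam t) (lam i)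
    simp only [Equiv.symm_apply_apply]
    ext t
    simp only [Finset.mem_filter, Finset.mem_univ, true_and]
    rw [hiff, hiff, hfix]

end StarA

section Helpers

variable {K C R : Type*} [AddCommMonoid K] [AddCommGroup C]
    [CommRing R] [IsDomain R] [UniqueFactorizationMonoid R]
    {π : K →+ C} {σ : R →+* R} {χ : K → R}

lemma delta_add (hD2 : ∀ k k', Associated (χ (k + k')) (χ k * χ k'))
    {c c' : C} (h : c ∈ DeltaSet π χ) (h' : c' ∈ DeltaSet π χ) :
    c + c' ∈ DeltaSet π χ := by
  obtain ⟨k, hk, hu⟩ := h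
  obtain ⟨k', hk', hu'⟩ := h'
  exact ⟨k + k', by rw [map_add, hk, hk'], (hD2 k k').symm.isUnit (hu.mul hu')⟩

lemma delta_neg (hD3 : ∀ k, ∃ j, π j = -π k ∧ Associated (χ j) (χ k))
    {c : C} (h : c ∈ DeltaSet π χ) : -c ∈ DeltaSet π χ := by
  obtain ⟨k, hk, hu⟩ := h
  obtain ⟨j, hj, ha⟩ := hD3 k
  exact ⟨j, by rw [hj, hk], ha.symm.isUnit hu⟩

lemma delta_zero (hE : ∃ k, IsUnit (χ k))
    (hD2 : ∀ k k', Associated (χ (k + k')) (χ k * χ k'))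
    (hD3 : ∀ k, ∃ j, π j = -π k ∧ Associated (χ j) (χ k)) :
    (0 : C) ∈ DeltaSet π χ := by
  obtain ⟨k, hu⟩ := hE
  obtain ⟨j, hj, ha⟩ := hD3 k
  exact ⟨k + j, by rw [map_add, hj, add_neg_cancel],
    (hD2 k j).symm.isUnit (hu.mul (ha.symm.isUnit hu))⟩

lemma delta_sum (hE : ∃ k, IsUnit (χ k))
    (hD2 : ∀ k k', Associated (χ (k + k')) (χ k * χ k'))
    (hD3 : ∀ k, ∃ j, π j = -π k ∧ Associated (χ j) (χ k))
    {ι : Type*} (s : Finset ι) (g : ι → C) (h : ∀ i ∈ s, g i ∈ DeltaSet π χ) :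
    (∑ i ∈ s, g i) ∈ DeltaSet π χ :=
  Finset.sum_induction g (· ∈ DeltaSet π χ) (fun _ _ ha hb => delta_add hD2 ha hb)
    (delta_zero hE hD2 hD3) h

lemma delta_subset_cprim (l : R) {c : C} (h : c ∈ DeltaSet π χ) :
    c ∈ Cprim σ π χ l := by
  obtain ⟨k, hk, hu⟩ := h
  exact ⟨k, hk, 0, by rw [pow_zero]; exact associated_one_iff_isUnit.mpr hu⟩

lemma cprim_add (hD2 : ∀ k k', Associated (χ (k + k')) (χ k * χ k')) {l : R}
    {c c' : C} (h : c ∈ Cprim σ π χ l) (h' : c' ∈ Cprim σ π χ l) :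
    c + c' ∈ Cprim σ π χ l := by
  obtain ⟨k, hk, n, ha⟩ := h
  obtain ⟨k', hk', n', ha'⟩ := h'
  refine ⟨k + k', by rw [map_add, hk, hk'], n + n', ?_⟩
  rw [pow_add]
  exact (hD2 k k').trans (ha.mul_mul ha')

lemma cprim_neg (hD3 : ∀ k, ∃ j, π j = -π k ∧ Associated (χ j) (χ k)) {l : R}
    {c : C} (h : c ∈ Cprim σ π χ l) : -c ∈ Cprim σ π χ l := by
  obtain ⟨k, hk, n, ha⟩ := h
  obtain ⟨j, hj, hja⟩ := hD3 k
  exact ⟨j, by rw [hj, hk], n, hja.trans ha⟩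

lemma cprim_sum (hE : ∃ k, IsUnit (χ k))
    (hD2 : ∀ k k', Associated (χ (k + k')) (χ k * χ k'))
    (hD3 : ∀ k, ∃ j, π j = -π k ∧ Associated (χ j) (χ k)) {l : R}
    {ι : Type*} (s : Finset ι) (g : ι → C) (h : ∀ i ∈ s, g i ∈ Cprim σ π χ l) :
    (∑ i ∈ s, g i) ∈ Cprim σ π χ l :=
  Finset.sum_induction g (· ∈ Cprim σ π χ l) (fun _ _ ha hb => cprim_add hD2 ha hb)
    (delta_subset_cprim l (delta_zero hE hD2 hD3)) h

lemma cprim_mono (hσ : ∀ r, σ (σ r) = r) {l m : R} (h : StarAssoc σ l m)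
    {c : C} (hc : c ∈ Cprim σ π χ l) : c ∈ Cprim σ π χ m := by
  obtain ⟨k, hk, n, ha⟩ := hc
  exact ⟨k, hk, n, ha.trans (Associated.pow_pow (sdual_assoc hσ h))⟩

lemma delta_subset_cco {l : R} (hl : Irreducible l) {c : C} (h : c ∈ DeltaSet π χ) :
    c ∈ Cco π χ l := by
  obtain ⟨k, hk, hu⟩ := h
  exact ⟨k, hk, fun hdvd => hl.not_isUnit (isUnit_of_dvd_unit hdvd hu)⟩

lemma cco_add (hD2 : ∀ k k', Associated (χ (k + k')) (χ k * χ k'))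
    {l : R} (hl : Irreducible l) {c c' : C} (h : c ∈ Cco π χ l) (h' : c' ∈ Cco π χ l) :
    c + c' ∈ Cco π χ l := by
  obtain ⟨k, hk, hd⟩ := h
  obtain ⟨k', hk', hd'⟩ := h'
  have hp := UniqueFactorizationMonoid.irreducible_iff_prime.mp hl
  refine ⟨k + k', by rw [map_add, hk, hk'], fun hdvd => ?_⟩
  rcases hp.2.2 _ _ (hdvd.trans (hD2 k k').dvd) with h | h
  exacts [hd h, hd' h]

lemma cco_sum (hE : ∃ k, IsUnit (χ k))
    (hD2 : ∀ k k', Associated (χ (k + k')) (χ k * χ k'))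
    (hD3 : ∀ k, ∃ j, π j = -π k ∧ Associated (χ j) (χ k))
    {l : R} (hl : Irreducible l)
    {ι : Type*} (s : Finset ι) (g : ι → C) (h : ∀ i ∈ s, g i ∈ Cco π χ l) :
    (∑ i ∈ s, g i) ∈ Cco π χ l :=
  Finset.sum_induction g (· ∈ Cco π χ l) (fun _ _ ha hb => cco_add hD2 hl ha hb)
    (delta_subset_cco hl (delta_zero hE hD2 hD3)) h

lemma cprim_subset_cco (hσ : ∀ r, σ (σ r) = r) {l μ : R}
    (hl : Irreducible l) (hμ : Irreducible μ) (hne : ¬ StarAssoc σ l μ)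
    {c : C} (h : c ∈ Cprim σ π χ l) : c ∈ Cco π χ μ := by
  obtain ⟨k, hk, n, ha⟩ := h
  have hp := UniqueFactorizationMonoid.irreducible_iff_prime.mp hμ
  refine ⟨k, hk, fun hdvd => ?_⟩
  have h2 : μ ∣ Sdual σ l := hp.dvd_of_dvd_pow (hdvd.trans ha.dvd)
  apply hne
  have hcase1 : μ ∣ l → StarAssoc σ l μ := fun hdl =>
    Or.inl (hμ.associated_of_dvd hl hdl).symm
  have hcase2 : μ ∣ σ l → StarAssoc σ l μ := by
    intro hdl
    have h3 := hμ.associated_of_dvd (irreducible_sigma hσ hl) hdl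
    have h4 := h3.map σ
    rw [hσ] at h4
    exact Or.inr h4.symm
  unfold Sdual at h2
  by_cases hc : Associated l (σ l)
  · rw [if_pos hc] at h2
    exact hcase1 h2
  · rw [if_neg hc] at h2
    rcases hp.2.2 _ _ h2 with h3 | h3
    exacts [hcase1 h3, hcase2 h3]

end Helpers

section Main

variable {K C R : Type*} [AddCommMonoid K] [AddCommGroup C]
    [CommRing R] [IsDomain R] [UniqueFactorizationMonoid R]
    {π : K →+ C} {σ : R →+* R} {χ : K → R}

open Classical in
lemma grouped (hσ : ∀ r, σ (σ r) = r)
    (hE : ∃ k, IsUnit (χ k))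
    (hD2 : ∀ k k', Associated (χ (k + k')) (χ k * χ k'))
    (hD3 : ∀ k, ∃ j, π j = -π k ∧ Associated (χ j) (χ k))
    (hU : ∀ (n : ℕ) (lam : Fin n → R) (cs : Fin n → C),
      (∀ i, Irreducible (lam i)) →
      (∀ i j, i ≠ j → ¬ StarAssoc σ (lam i) (lam j)) →
      (∀ i, cs i ∈ Cprim σ π χ (lam i)) →
      (∑ i, cs i) ∈ DeltaSet π χ → ∀ i, cs i ∈ DeltaSet π χ)
    {n : ℕ} {lam : Fin n → R} {cs : Fin n → C}
    (hirr : ∀ i, Irreducible (lam i))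
    (hcp : ∀ i, cs i ∈ Cprim σ π χ (lam i))
    (hs : (∑ i, cs i) ∈ DeltaSet π χ) (i : Fin n) :
    (∑ t ∈ Finset.univ.filter fun t => StarAssoc σ (lam t) (lam i), cs t) ∈ DeltaSet π χ := by
  obtain ⟨N, g, hpair, hsum, hsurj⟩ := regroup σ hσ lam cs
  have hCSmem : ∀ j, (∑ t ∈ Finset.univ.filter fun t => StarAssoc σ (lam t) (lam (g j)), cs t)
      ∈ Cprim σ π χ (lam (g j)) := by
    intro j
    refine cprim_sum hE hD2 hD3 _ _ fun t ht => ?_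
    exact cprim_mono hσ (Finset.mem_filter.mp ht).2 (hcp t)
  have hall := hU N (fun j => lam (g j))
    (fun j => ∑ t ∈ Finset.univ.filter fun t => StarAssoc σ (lam t) (lam (g j)), cs t)
    (fun j => hirr _) hpair hCSmem (by rw [hsum]; exact hs)
  obtain ⟨j, hj⟩ := hsurj i
  have h2 : (∑ t ∈ Finset.univ.filter fun t => StarAssoc σ (lam t) (lam (g j)), cs t)
      ∈ DeltaSet π χ := hall j
  rwa [hj] at h2

end Main

/-- Strong primary decomposability implies left and right primary decomposability. -/
theorem statement4
    {K C R : Type*} [AddCommMonoid K] [AddCommGroup C]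
    [CommRing R] [IsDomain R] [UniqueFactorizationMonoid R]
    (π : K →+ C) (hπ : Function.Surjective π)
    (σ : R →+* R) (hσ : ∀ r, σ (σ r) = r)
    (χ : K → R) (hχ : ∀ k, χ k ≠ 0)
    (hD1 : ∀ k, Associated (σ (χ k)) (χ k))
    (hD2 : ∀ k k', Associated (χ (k + k')) (χ k * χ k'))
    (hD3 : ∀ k, ∃ j, π j = -π k ∧ Associated (χ j) (χ k))
    -- strong existence: a decomposition along irreducible divisors of `Δ_k`
    (hSE : ∀ k : K, ∃ d ∈ DeltaSet π χ, ∃ n : ℕ, ∃ lam : Fin n → R, ∃ cs : Fin n → C,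
      (∀ i, Irreducible (lam i) ∧ lam i ∣ χ k) ∧
      (∀ i, cs i ∈ Cprim σ π χ (lam i)) ∧ π k = d + ∑ i, cs i)
    -- uniqueness
    (hU : ∀ (n : ℕ) (lam : Fin n → R) (cs : Fin n → C),
      (∀ i, Irreducible (lam i)) →
      (∀ i j, i ≠ j → ¬ StarAssoc σ (lam i) (lam j)) →
      (∀ i, cs i ∈ Cprim σ π χ (lam i)) →
      (∑ i, cs i) ∈ DeltaSet π χ → ∀ i, cs i ∈ DeltaSet π χ) :
    -- left primary decomposability: existence
    (∀ c : C, ∃ d ∈ DeltaSet π χ, ∃ n : ℕ, ∃ lam : Fin n → R, ∃ cs : Fin n → C,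
      (∀ i, Irreducible (lam i)) ∧ (∀ i, cs i ∈ Cprim σ π χ (lam i)) ∧
      c = d + ∑ i, cs i) ∧
    -- left primary decomposability: uniqueness
    (∀ (n : ℕ) (lam : Fin n → R) (cs : Fin n → C),
      (∀ i, Irreducible (lam i)) →
      (∀ i j, i ≠ j → ¬ StarAssoc σ (lam i) (lam j)) →
      (∀ i, cs i ∈ Cprim σ π χ (lam i)) →
      (∑ i, cs i) ∈ DeltaSet π χ → ∀ i, cs i ∈ DeltaSet π χ) ∧
    -- right primary decomposability: injectivity of `Φ_R` (the "in particular" clause)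
    (∀ c : C, (∀ l : R, Irreducible l → c ∈ Cco π χ l) → c ∈ DeltaSet π χ) ∧
    -- right primary decomposability: surjectivity of `Φ_R`
    (∀ c : C, ∀ l : R, Irreducible l → ∃ d : C,
      c - d ∈ Cco π χ l ∧
      ∀ μ : R, Irreducible μ → ¬ StarAssoc σ l μ → d ∈ Cco π χ μ) := by
  classical
  have hE : ∃ k, IsUnit (χ k) := by
    obtain ⟨d0, ⟨k0, -, hu0⟩, -⟩ := hSE 0
    exact ⟨k0, hu0⟩
  refine ⟨?_, hU, ?_, ?_⟩
  · -- left existence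
    intro c
    obtain ⟨k, hk⟩ := hπ c
    obtain ⟨d0, hd0, n, lam, cs, h1, h2, h3⟩ := hSE k
    exact ⟨d0, hd0, n, lam, cs, fun i => (h1 i).1, h2, by rw [← hk, h3]⟩
  · -- injectivity
    intro c hc
    obtain ⟨k, hk⟩ := hπ c
    obtain ⟨d0, hd0, n, lam, cs, h1, h2, h3⟩ := hSE k
    rw [hk] at h3
    have hG : ∀ i : Fin n,
        (∑ t ∈ Finset.univ.filter fun t => StarAssoc σ (lam t) (lam i), cs t)
          ∈ DeltaSet π χ := by
      intro i
      obtain ⟨k', hk', hnd⟩ := hc (lam i) (h1 i).1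
      obtain ⟨d', hd', m, mu, cs', h1', h2', h3'⟩ := hSE k'
      rw [hk'] at h3'
      have hmu : ∀ j, ¬ StarAssoc σ (mu j) (lam i) := by
        intro j hsa
        apply hnd
        rcases hsa with hsa | hsa
        · exact dvd_trans hsa.symm.dvd (h1' j).2
        · have h4 : σ (lam i) ∣ χ k' := dvd_trans hsa.symm.dvd (h1' j).2
          have h5 := map_dvd σ h4
          rw [hσ] at h5
          exact h5.trans (hD1 k').dvd
      set LAM : Fin (n + m) → R := Fin.append lam mu with hLAM
      set CS2 : Fin (n + m) → C := Fin.append cs (fun j => -cs' j) with hCS2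
      have hirrT : ∀ t, Irreducible (LAM t) := fun t =>
        Fin.addCases (motive := fun t => Irreducible (LAM t))
          (fun i0 => by simp only [hLAM, Fin.append_left]; exact (h1 i0).1)
          (fun j0 => by simp only [hLAM, Fin.append_right]; exact (h1' j0).1) t
      have hcpT : ∀ t, CS2 t ∈ Cprim σ π χ (LAM t) := fun t =>
        Fin.addCases (motive := fun t => CS2 t ∈ Cprim σ π χ (LAM t))
          (fun i0 => by simp only [hLAM, hCS2, Fin.append_left]; exact h2 i0)
          (fun j0 => by
            simp only [hLAM, hCS2, Fin.append_right]
            exact cprim_neg hD3 (h2' j0)) t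
      have hsumT : (∑ t, CS2 t) ∈ DeltaSet π χ := by
        have hcs : ∑ t, cs t = c - d0 := by rw [h3]; abel
        have hcs' : ∑ t, cs' t = c - d' := by rw [h3']; abel
        have heq : ∑ t, CS2 t = d' - d0 := by
          rw [Fin.sum_univ_add]
          simp only [hCS2, Fin.append_left, Fin.append_right]
          rw [Finset.sum_neg_distrib, hcs, hcs']
          abel
        rw [heq, sub_eq_add_neg]
        exact delta_add hD2 hd' (delta_neg hD3 hd0)
      have hkey := grouped hσ hE hD2 hD3 hU hirrT hcpT hsumT (Fin.castAdd m i)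
      have hfilter : (∑ t ∈ Finset.univ.filter
            fun t => StarAssoc σ (LAM t) (LAM (Fin.castAdd m i)), CS2 t)
          = ∑ t ∈ Finset.univ.filter fun t => StarAssoc σ (lam t) (lam i), cs t := by
        rw [Finset.sum_filter, Finset.sum_filter, Fin.sum_univ_add]
        simp only [hLAM, hCS2, Fin.append_left, Fin.append_right]
        rw [Finset.sum_eq_zero (fun j (_ : j ∈ Finset.univ) => if_neg (hmu j)), add_zero]
      rwa [hfilter] at hkey
    have hsum : (∑ t, cs t) ∈ DeltaSet π χ := by
      obtain ⟨N, g, -, hsum2, -⟩ := regroup σ hσ lam cs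
      rw [← hsum2]
      exact delta_sum hE hD2 hD3 _ _ fun j _ => hG (g j)
    rw [h3]
    exact delta_add hD2 hd0 hsum
  · -- surjectivity
    intro c l hl
    obtain ⟨k, hk⟩ := hπ c
    obtain ⟨d0, hd0, n, lam, cs, h1, h2, h3⟩ := hSE k
    rw [hk] at h3
    refine ⟨∑ t ∈ Finset.univ.filter fun t => StarAssoc σ (lam t) l, cs t, ?_, ?_⟩
    · have heq : c - (∑ t ∈ Finset.univ.filter fun t => StarAssoc σ (lam t) l, cs t)
          = d0 + ∑ t ∈ Finset.univ.filter fun t => ¬ StarAssoc σ (lam t) l, cs t := by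
        rw [h3, ← Finset.sum_filter_add_sum_filter_not Finset.univ
          (fun t => StarAssoc σ (lam t) l) cs]
        abel
      rw [heq]
      refine cco_add hD2 hl (delta_subset_cco hl hd0) ?_
      refine cco_sum hE hD2 hD3 hl _ _ fun t ht => ?_
      exact cprim_subset_cco hσ (h1 t).1 hl (Finset.mem_filter.mp ht).2 (h2 t)
    · intro μ hμ hne
      refine cprim_subset_cco hσ hl hμ hne ?_
      refine cprim_sum hE hD2 hD3 _ _ fun t ht => ?_
      exact cprim_mono hσ (Finset.mem_filter.mp ht).2 (h2 t)
end
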